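/- An r×n ρ-latin rectangle L on symbols [k] can be completed to an n×n ρ-latin square if and only if ρ_ℓ − e_ℓ ≤ n − r for all ℓ ∈ [k] and, for every subset K ⊆ [k] of symbols, Σ_{ℓ∈K}(ρ_ℓ − e_ℓ) ≤ Σ_{j=1}^{n} min{n − r, μ_K(j)}, where μ_K(j) is the number of symbols in K missing in column j. -/

import Mathlib

open Finset

/-- `L` is a (partial) latin array: each symbol occurs at most once in each
row and at most once in each column. -/
def latinArr {r s k : ℕ} (L : Fin r → Fin s → Fin k) : Prop :=
  (∀ i, Function.Injective (L i)) ∧ (∀ j, Function.Injective (fun i => L i j))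

/-- Number of occurrences of symbol `ℓ` in `L`. -/
def symCount {r s k : ℕ} (L : Fin r → Fin s → Fin k) (ℓ : Fin k) : ℕ :=
  ((univ : Finset (Fin r × Fin s)).filter (fun p => L p.1 p.2 = ℓ)).card

/-- `μ_I(ℓ)`: number of rows in `I` in which symbol `ℓ` is missing. -/
def muRows {r s k : ℕ} (L : Fin r → Fin s → Fin k) (I : Finset (Fin r)) (ℓ : Fin k) : ℕ :=
  (I.filter (fun i => ∀ j, L i j ≠ ℓ)).card

/-- `μ_J(ℓ)`: number of columns in `J` in which symbol `ℓ` is missing. -/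
def muCols {r s k : ℕ} (L : Fin r → Fin s → Fin k) (J : Finset (Fin s)) (ℓ : Fin k) : ℕ :=
  (J.filter (fun j => ∀ i, L i j ≠ ℓ)).card

/-- `μ_K(i)` for a row `i`: number of symbols of `K` missing in row `i`. -/
def muSymRow {r s k : ℕ} (L : Fin r → Fin s → Fin k) (K : Finset (Fin k)) (i : Fin r) : ℕ :=
  (K.filter (fun ℓ => ∀ j, L i j ≠ ℓ)).card

/-- `μ_K(j)` for a column `j`: number of symbols of `K` missing in column `j`. -/
def muSymCol {r s k : ℕ} (L : Fin r → Fin s → Fin k) (K : Finset (Fin k)) (j : Fin s) : ℕ :=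
  (K.filter (fun ℓ => ∀ i, L i j ≠ ℓ)).card

/-- `S` is an `n × n` `ρ`-latin square. -/
def rhoLatinSquare {n k : ℕ} (ρ : Fin k → ℕ) (S : Fin n → Fin n → Fin k) : Prop :=
  latinArr S ∧ ∀ ℓ, symCount S ℓ = ρ ℓ

/-- `S` extends `L` on the top-left `r × s` corner. -/
def extends' {r s n k : ℕ} (hr : r ≤ n) (hs : s ≤ n)
    (L : Fin r → Fin s → Fin k) (S : Fin n → Fin n → Fin k) : Prop :=
  ∀ i j, S (Fin.castLE hr i) (Fin.castLE hs j) = L i j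


namespace Stmt5Aux

open Finset

variable {n k : ℕ}

def degS (E : Finset (Fin k × Fin n)) (ℓ : Fin k) : ℕ := (E.filter fun p => p.1 = ℓ).card

def degC (E : Finset (Fin k × Fin n)) (j : Fin n) : ℕ := (E.filter fun p => p.2 = j).card

def valid (M : Fin n → Finset (Fin k)) (a : Fin k → ℕ) (m : ℕ)
    (E : Finset (Fin k × Fin n)) : Prop :=
  (∀ p ∈ E, p.1 ∈ M p.2) ∧ (∀ ℓ, degS E ℓ ≤ a ℓ) ∧ (∀ j, degC E j ≤ m)

def Rel (M : Fin n → Finset (Fin k)) (E : Finset (Fin k × Fin n)) (j j' : Fin n) : Prop :=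
  ∃ ℓ, ℓ ∈ M j ∧ (ℓ, j) ∉ E ∧ (ℓ, j') ∈ E

lemma degS_insert (E : Finset (Fin k × Fin n)) (p : Fin k × Fin n) (hp : p ∉ E) (ℓ : Fin k) :
    degS (insert p E) ℓ = degS E ℓ + if p.1 = ℓ then 1 else 0 := by
  unfold degS
  rw [Finset.filter_insert]
  split
  · rw [Finset.card_insert_of_notMem (fun h => hp (Finset.mem_filter.1 h).1)]
  · simp

lemma degC_insert (E : Finset (Fin k × Fin n)) (p : Fin k × Fin n) (hp : p ∉ E) (j : Fin n) :
    degC (insert p E) j = degC E j + if p.2 = j then 1 else 0 := by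
  unfold degC
  rw [Finset.filter_insert]
  split
  · rw [Finset.card_insert_of_notMem (fun h => hp (Finset.mem_filter.1 h).1)]
  · simp

lemma degS_erase (E : Finset (Fin k × Fin n)) (p : Fin k × Fin n) (hp : p ∈ E) (ℓ : Fin k) :
    degS E ℓ = degS (E.erase p) ℓ + if p.1 = ℓ then 1 else 0 := by
  have h1 : degS (insert p (E.erase p)) ℓ = degS (E.erase p) ℓ + if p.1 = ℓ then 1 else 0 :=
    degS_insert _ p (Finset.notMem_erase p E) ℓ
  rwa [Finset.insert_erase hp] at h1

lemma degC_erase (E : Finset (Fin k × Fin n)) (p : Fin k × Fin n) (hp : p ∈ E) (j : Fin n) :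
    degC E j = degC (E.erase p) j + if p.2 = j then 1 else 0 := by
  have h1 : degC (insert p (E.erase p)) j = degC (E.erase p) j + if p.2 = j then 1 else 0 :=
    degC_insert _ p (Finset.notMem_erase p E) j
  rwa [Finset.insert_erase hp] at h1

lemma degS_pos (E : Finset (Fin k × Fin n)) (ℓ : Fin k) (j : Fin n) (h : (ℓ, j) ∈ E) :
    1 ≤ degS E ℓ :=
  Finset.card_pos.2 ⟨(ℓ, j), Finset.mem_filter.2 ⟨h, rfl⟩⟩

lemma sum_degC (E : Finset (Fin k × Fin n)) : ∑ j, degC E j = E.card :=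
  (Finset.card_eq_sum_card_fiberwise (fun p _ => Finset.mem_univ p.2)).symm

lemma sum_degS (E : Finset (Fin k × Fin n)) : ∑ ℓ, degS E ℓ = E.card :=
  (Finset.card_eq_sum_card_fiberwise (fun p _ => Finset.mem_univ p.1)).symm

lemma aug (M : Fin n → Finset (Fin k)) (a : Fin k → ℕ) (m : ℕ) :
    ∀ d : ℕ, ∀ E : Finset (Fin k × Fin n), valid M a m E →
    ∀ c : ℕ → Fin n, degC E (c 0) < m →
    (∀ i < d, Rel M E (c i) (c (i + 1))) →
    ∀ ℓ : Fin k, ℓ ∈ M (c d) → (ℓ, c d) ∉ E → degS E ℓ < a ℓ →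
    ∃ E', valid M a m E' ∧ E'.card = E.card + 1 := by
  intro d
  induction d using Nat.strong_induction_on with
  | _ d IH =>
  intro E hE c hdef hstep ℓ hℓM hℓE hℓs
  by_cases hdup : ∃ i, i < d ∧ ∃ i', i' ≤ d ∧ i < i' ∧ c i = c i'
  · obtain ⟨i, hid, i', hi'd, hii', hcc⟩ := hdup
    set t := i' - i with ht
    have ht1 : 1 ≤ t := by omega
    set d' := d - t with hd'
    have hid' : i ≤ d' := by omega
    have hd'd : d' < d := by omega
    set c' : ℕ → Fin n := fun s => if s ≤ i then c s else c (s + t) with hc'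
    have hc'0 : c' 0 = c 0 := by simp [hc']
    have hc'd : c' d' = c d := by
      by_cases h : d' ≤ i
      · have h1 : d' = i := le_antisymm h hid'
        have h2 : d = i' := by omega
        simp only [hc', if_pos h]
        rw [h1, hcc, h2]
      · simp only [hc', if_neg h]
        congr 1
        omega
    have hstep' : ∀ s < d', Rel M E (c' s) (c' (s + 1)) := by
      intro s hs
      by_cases h1 : s + 1 ≤ i
      · have e1 : c' s = c s := by
          simp only [hc']; rw [if_pos (by omega : s ≤ i)]
        have e2 : c' (s + 1) = c (s + 1) := by
          simp only [hc']; rw [if_pos h1]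
        rw [e1, e2]; exact hstep s (by omega)
      · by_cases h2 : s ≤ i
        · have hsi : s = i := by omega
          have e1 : c' s = c i' := by
            simp only [hc']
            rw [if_pos h2, hsi, hcc]
          have e2 : c' (s + 1) = c (i' + 1) := by
            simp only [hc', if_neg h1]
            congr 1
            omega
          rw [e1, e2]; exact hstep i' (by omega)
        · have e1 : c' s = c (s + t) := by
            simp only [hc']; rw [if_neg h2]
          have e2 : c' (s + 1) = c (s + t + 1) := by
            simp only [hc', if_neg (by omega : ¬ s + 1 ≤ i)]
            congr 1
            omega
          rw [e1, e2]; exact hstep (s + t) (by omega)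
    exact IH d' hd'd E hE c' (by rwa [hc'0]) hstep' ℓ (by rwa [hc'd]) (by rwa [hc'd]) hℓs
  · have hinj : ∀ i, i ≤ d → ∀ i', i' ≤ d → c i = c i' → i = i' := by
      intro i hi i' hi' h
      by_contra hne
      rcases lt_or_gt_of_ne hne with hlt | hgt
      · exact hdup ⟨i, by omega, i', hi', hlt, h⟩
      · exact hdup ⟨i', by omega, i, hi, hgt, h.symm⟩
    match d, hstep, hℓM, hℓE, hinj with
    | 0, hstep, hℓM, hℓE, hinj =>
      refine ⟨insert (ℓ, c 0) E, ⟨?_, ?_, ?_⟩, Finset.card_insert_of_notMem hℓE⟩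
      · intro p hp
        rcases Finset.mem_insert.1 hp with h | h
        · rw [h]; exact hℓM
        · exact hE.1 p h
      · intro x
        rw [degS_insert E _ hℓE x]
        by_cases h : ℓ = x
        · subst h; simpa using hℓs
        · simpa [h] using hE.2.1 x
      · intro j
        rw [degC_insert E _ hℓE j]
        by_cases h : c 0 = j
        · subst h; simpa using hdef
        · simpa [h] using hE.2.2 j
    | (d'' + 1), hstep, hℓM, hℓE, hinj =>
      obtain ⟨ℓ', hℓ'M, hℓ'nE, hℓ'E⟩ := hstep d'' (by omega)
      have hne : ℓ' ≠ ℓ := by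
        intro h
        exact hℓE (h ▸ hℓ'E)
      have hcne : ∀ i, i ≤ d'' → c i ≠ c (d'' + 1) := by
        intro i hi h
        have := hinj i (by omega) (d'' + 1) (by omega) h
        omega
      set E₁ := insert (ℓ, c (d'' + 1)) (E.erase (ℓ', c (d'' + 1))) with hE₁def
      have hnm : (ℓ, c (d'' + 1)) ∉ E.erase (ℓ', c (d'' + 1)) := by
        intro h
        exact hℓE (Finset.mem_of_mem_erase h)
      have hcard : E₁.card = E.card := by
        rw [hE₁def, Finset.card_insert_of_notMem hnm, Finset.card_erase_of_mem hℓ'E]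
        have : 1 ≤ E.card := Finset.card_pos.2 ⟨_, hℓ'E⟩
        omega
      have hdegS : ∀ x, degS E₁ x + (if ℓ' = x then 1 else 0) =
          degS E x + (if ℓ = x then 1 else 0) := by
        intro x
        rw [hE₁def, degS_insert _ _ hnm x]
        have h2 := degS_erase E (ℓ', c (d'' + 1)) hℓ'E x
        simp only at h2 ⊢
        omega
      have hdegC : ∀ j, degC E₁ j = degC E j := by
        intro j
        rw [hE₁def, degC_insert _ _ hnm j]
        have h2 := degC_erase E (ℓ', c (d'' + 1)) hℓ'E j
        simp only at h2 ⊢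
        omega
      have hvalid₁ : valid M a m E₁ := by
        refine ⟨?_, ?_, ?_⟩
        · intro p hp
          rcases Finset.mem_insert.1 hp with h | h
          · rw [h]; exact hℓM
          · exact hE.1 p (Finset.mem_of_mem_erase h)
        · intro x
          have h1 := hdegS x
          have h2 := hE.2.1 x
          by_cases hx : ℓ = x
          · subst hx
            have := hℓs
            rw [if_neg hne, if_pos rfl] at h1
            omega
          · by_cases hx' : ℓ' = x
            · subst hx'
              rw [if_pos rfl, if_neg hx] at h1
              omega
            · rw [if_neg hx', if_neg hx] at h1
              omega
        · intro j
          rw [hdegC j]; exact hE.2.2 j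
      have hstep₁ : ∀ i < d'', Rel M E₁ (c i) (c (i + 1)) := by
        intro i hi
        obtain ⟨ℓi, h1, h2, h3⟩ := hstep i (by omega)
        refine ⟨ℓi, h1, ?_, ?_⟩
        · intro h
          rcases Finset.mem_insert.1 h with h | h
          · exact hcne i (by omega) (congrArg Prod.snd h)
          · exact h2 (Finset.mem_of_mem_erase h)
        · apply Finset.mem_insert_of_mem
          apply Finset.mem_erase.2
          refine ⟨?_, h3⟩
          intro h
          exact hcne (i + 1) (by omega) (congrArg Prod.snd h)
      have hℓ'E₁ : (ℓ', c d'') ∉ E₁ := by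
        intro h
        rcases Finset.mem_insert.1 h with h | h
        · exact hcne d'' le_rfl (congrArg Prod.snd h)
        · exact hℓ'nE (Finset.mem_of_mem_erase h)
      have hℓ's₁ : degS E₁ ℓ' < a ℓ' := by
        have h1 := hdegS ℓ'
        rw [if_pos rfl, if_neg (fun h => hne h.symm)] at h1
        have h2 := hE.2.1 ℓ'
        have h3 := degS_pos E ℓ' (c (d'' + 1)) hℓ'E
        omega
      have hdef₁ : degC E₁ (c 0) < m := by rw [hdegC]; exact hdef
      obtain ⟨E', hv', hc'⟩ := IH d'' (by omega) E₁ hvalid₁ c hdef₁ hstep₁ ℓ' hℓ'M hℓ'E₁ hℓ's₁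
      exact ⟨E', hv', by omega⟩

lemma GR_exists (M : Fin n → Finset (Fin k)) (a : Fin k → ℕ) (m : ℕ)
    (hsum : ∑ ℓ, a ℓ = n * m)
    (hcut : ∀ K : Finset (Fin k), ∑ ℓ ∈ K, a ℓ ≤ ∑ j, min m ((K ∩ M j).card)) :
    ∃ w : Fin n → Finset (Fin k), (∀ j, w j ⊆ M j) ∧ (∀ j, (w j).card = m) ∧
      ∀ ℓ, ((univ : Finset (Fin n)).filter (fun j => ℓ ∈ w j)).card = a ℓ := by
  classical
  obtain ⟨E, hEv, hEmax⟩ : ∃ E, valid M a m E ∧ ∀ E', valid M a m E' → E'.card ≤ E.card := by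
    have hne : ((univ : Finset (Finset (Fin k × Fin n))).filter (valid M a m)).Nonempty := by
      refine ⟨∅, Finset.mem_filter.2 ⟨Finset.mem_univ _, ?_, ?_, ?_⟩⟩
      · simp
      · intro ℓ; simp [degS]
      · intro j; simp [degC]
    obtain ⟨E, hE, hmax⟩ := Finset.exists_max_image _ Finset.card hne
    exact ⟨E, (Finset.mem_filter.1 hE).2,
      fun E' hE' => hmax E' (Finset.mem_filter.2 ⟨Finset.mem_univ _, hE'⟩)⟩
  have hle : ∀ j, degC E j ≤ m := hEv.2.2
  have hsumC : ∑ j, degC E j = E.card := sum_degC E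
  have hsumS : ∑ ℓ, degS E ℓ = E.card := sum_degS E
  have hcard : E.card = n * m := by
    by_contra hne
    have hEle : E.card ≤ n * m := by
      have h1 : ∑ j : Fin n, degC E j ≤ ∑ _j : Fin n, m :=
        Finset.sum_le_sum (fun j _ => hle j)
      rw [hsumC, Finset.sum_const, Finset.card_univ, Fintype.card_fin, smul_eq_mul] at h1
      exact h1
    obtain ⟨j0, hj0⟩ : ∃ j0, degC E j0 < m := by
      by_contra hall
      push_neg at hall
      have heq : ∀ j, degC E j = m := fun j => le_antisymm (hle j) (hall j)
      rw [Finset.sum_congr rfl (fun j _ => heq j), Finset.sum_const, Finset.card_univ,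
        Fintype.card_fin, smul_eq_mul] at hsumC
      omega
    set Reach : Fin n → Prop :=
      fun j => ∃ d, ∃ c : ℕ → Fin n, c 0 = j0 ∧ c d = j ∧ ∀ i < d, Rel M E (c i) (c (i + 1))
      with hReach
    set Z := (univ : Finset (Fin n)).filter Reach with hZ
    set Y := (univ : Finset (Fin k)).filter (fun ℓ => ∃ j ∈ Z, ℓ ∈ M j ∧ (ℓ, j) ∉ E) with hY
    have hj0Z : j0 ∈ Z :=
      Finset.mem_filter.2 ⟨Finset.mem_univ _,
        ⟨0, fun _ => j0, rfl, rfl, fun i hi => absurd hi (by omega)⟩⟩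
    have hYsat : ∀ ℓ ∈ Y, degS E ℓ = a ℓ := by
      intro ℓ hℓ
      obtain ⟨j, hjZ, hM, hEn⟩ := (Finset.mem_filter.1 hℓ).2
      by_contra hne'
      have hlt : degS E ℓ < a ℓ := lt_of_le_of_ne (hEv.2.1 ℓ) hne'
      obtain ⟨d, c, hc0, hcd, hst⟩ := (Finset.mem_filter.1 hjZ).2
      obtain ⟨E', hv', hc'⟩ :=
        aug M a m d E hEv c (hc0 ▸ hj0) hst ℓ (hcd ▸ hM) (hcd ▸ hEn) hlt
      have := hEmax E' hv'
      omega
    have hYZ : ∀ ℓ ∈ Y, ∀ j', (ℓ, j') ∈ E → j' ∈ Z := by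
      intro ℓ hℓ j' hj'
      obtain ⟨j, hjZ, hM, hEn⟩ := (Finset.mem_filter.1 hℓ).2
      obtain ⟨d, c, hc0, hcd, hst⟩ := (Finset.mem_filter.1 hjZ).2
      refine Finset.mem_filter.2 ⟨Finset.mem_univ _,
        d + 1, fun s => if s ≤ d then c s else j', ?_, ?_, ?_⟩
      · show (if 0 ≤ d then c 0 else j') = j0
        rw [if_pos (Nat.zero_le d)]; exact hc0
      · show (if d + 1 ≤ d then c (d + 1) else j') = j'
        rw [if_neg (by omega)]
      · intro i hi
        show Rel M E (if i ≤ d then c i else j') (if i + 1 ≤ d then c (i + 1) else j')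
        by_cases h : i < d
        · rw [if_pos (by omega : i ≤ d), if_pos (by omega : i + 1 ≤ d)]
          exact hst i h
        · have hieq : i = d := by omega
          subst hieq
          rw [if_pos le_rfl, if_neg (by omega : ¬ i + 1 ≤ i)]
          exact ⟨ℓ, hcd ▸ hM, hcd ▸ hEn, hj'⟩
    have hZcol : ∀ j ∈ Z, ∀ ℓ, ℓ ∈ M j → ℓ ∉ Y → (ℓ, j) ∈ E := by
      intro j hj ℓ hM hnY
      by_contra h
      exact hnY (Finset.mem_filter.2 ⟨Finset.mem_univ _, j, hj, hM, h⟩)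
    set K := (univ : Finset (Fin k)) \ Y with hK
    have key1 : ∀ j ∈ Z, min m ((K ∩ M j).card) ≤
        (E.filter (fun p => p.2 = j ∧ p.1 ∉ Y)).card := by
      intro j hj
      refine le_trans (min_le_right _ _) ?_
      apply Finset.card_le_card_of_injOn (fun ℓ => (ℓ, j))
      · intro ℓ hℓ
        have hℓK := Finset.mem_inter.1 hℓ
        have hnY : ℓ ∉ Y := (Finset.mem_sdiff.1 hℓK.1).2
        exact Finset.mem_filter.2 ⟨hZcol j hj ℓ hℓK.2 hnY, rfl, hnY⟩
      · intro x _ y _ h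
        exact congrArg Prod.fst h
    have hfib : (E.filter (fun p => p.1 ∈ Y)).card =
        ∑ j ∈ Z, (E.filter (fun p => p.2 = j ∧ p.1 ∈ Y)).card := by
      rw [Finset.card_eq_sum_card_fiberwise (f := Prod.snd) (t := Z)
        (fun p hp => hYZ p.1 (Finset.mem_filter.1 hp).2 p.2
          (by simpa using (Finset.mem_filter.1 hp).1))]
      refine Finset.sum_congr rfl (fun j hj => ?_)
      rw [Finset.filter_filter]
      exact congrArg Finset.card (Finset.filter_congr (fun x _ => by tauto))
    have hfib2 : (E.filter (fun p => p.1 ∈ Y)).card = ∑ ℓ ∈ Y, degS E ℓ := by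
      rw [Finset.card_eq_sum_card_fiberwise (f := Prod.fst) (s := E.filter (fun p => p.1 ∈ Y)) (t := Y)
        (fun p hp => (Finset.mem_filter.1 hp).2)]
      refine Finset.sum_congr rfl (fun ℓ hℓ => ?_)
      rw [Finset.filter_filter]
      exact congrArg Finset.card (Finset.filter_congr (fun x _ =>
        ⟨fun h => h.2, fun h => ⟨by rw [h]; exact hℓ, h⟩⟩))
    have hsplit : ∀ j, (E.filter (fun p => p.2 = j ∧ p.1 ∉ Y)).card +
        (E.filter (fun p => p.2 = j ∧ p.1 ∈ Y)).card = degC E j := by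
      intro j
      unfold degC
      rw [Finset.card_filter, Finset.card_filter, Finset.card_filter,
        ← Finset.sum_add_distrib]
      refine Finset.sum_congr rfl (fun p _ => ?_)
      by_cases h1 : p.2 = j <;> by_cases h2 : p.1 ∈ Y <;> simp [h1, h2]
    have key2 : ∑ j ∈ Z, (E.filter (fun p => p.2 = j ∧ p.1 ∉ Y)).card +
        ∑ ℓ ∈ Y, degS E ℓ = ∑ j ∈ Z, degC E j := by
      rw [← hfib2, hfib, ← Finset.sum_add_distrib]
      exact Finset.sum_congr rfl (fun j _ => hsplit j)
    have key3 : ∑ j ∈ Z, degC E j + 1 ≤ Z.card * m := by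
      have h1 : ∑ j ∈ Z, degC E j < ∑ _j ∈ Z, m :=
        Finset.sum_lt_sum (fun j _ => hle j) ⟨j0, hj0Z, hj0⟩
      rw [Finset.sum_const, smul_eq_mul] at h1
      omega
    have hZle : Z.card ≤ n := by
      simpa using Finset.card_le_univ Z
    have hKsum : ∑ ℓ ∈ K, a ℓ + ∑ ℓ ∈ Y, a ℓ = n * m := by
      rw [hK, Finset.sum_sdiff (Finset.subset_univ Y), hsum]
    have hYa : ∑ ℓ ∈ Y, degS E ℓ = ∑ ℓ ∈ Y, a ℓ :=
      Finset.sum_congr rfl (fun ℓ hℓ => hYsat ℓ hℓ)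
    have hsplitRHS : ∑ j ∈ univ \ Z, min m ((K ∩ M j).card) +
        ∑ j ∈ Z, min m ((K ∩ M j).card) = ∑ j, min m ((K ∩ M j).card) :=
      Finset.sum_sdiff (Finset.subset_univ Z)
    have houter : ∑ j ∈ univ \ Z, min m ((K ∩ M j).card) ≤ (n - Z.card) * m := by
      calc ∑ j ∈ univ \ Z, min m ((K ∩ M j).card) ≤ ∑ _j ∈ univ \ Z, m :=
            Finset.sum_le_sum (fun j _ => min_le_left _ _)
        _ = (univ \ Z).card * m := by rw [Finset.sum_const, smul_eq_mul]
        _ = (n - Z.card) * m := by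
            rw [Finset.card_sdiff_of_subset (Finset.subset_univ Z), Finset.card_univ, Fintype.card_fin]
    have hinner : ∑ j ∈ Z, min m ((K ∩ M j).card) ≤
        ∑ j ∈ Z, (E.filter (fun p => p.2 = j ∧ p.1 ∉ Y)).card :=
      Finset.sum_le_sum key1
    have hfinal := hcut K
    have hmul : (n - Z.card) * m + Z.card * m = n * m := by
      rw [← Nat.add_mul]
      congr 1
      omega
    omega
  have hCsat : ∀ j, degC E j = m := by
    by_contra hne
    push_neg at hne
    obtain ⟨j1, hj1⟩ := hne
    have h1 : ∑ j : Fin n, degC E j < ∑ _j : Fin n, m :=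
      Finset.sum_lt_sum (fun j _ => hle j) ⟨j1, Finset.mem_univ _, lt_of_le_of_ne (hle j1) hj1⟩
    rw [hsumC, hcard, Finset.sum_const, Finset.card_univ, Fintype.card_fin, smul_eq_mul] at h1
    omega
  have hSsat : ∀ ℓ, degS E ℓ = a ℓ := by
    by_contra hne
    push_neg at hne
    obtain ⟨ℓ1, hℓ1⟩ := hne
    have h1 : ∑ ℓ, degS E ℓ < ∑ ℓ, a ℓ :=
      Finset.sum_lt_sum (fun ℓ _ => hEv.2.1 ℓ)
        ⟨ℓ1, Finset.mem_univ _, lt_of_le_of_ne (hEv.2.1 ℓ1) hℓ1⟩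
    rw [hsumS, hcard, hsum] at h1
    omega
  refine ⟨fun j => (E.filter (fun p => p.2 = j)).image Prod.fst, ?_, ?_, ?_⟩
  · intro j ℓ hℓ
    obtain ⟨p, hp, hpe⟩ := Finset.mem_image.1 hℓ
    obtain ⟨hpE, hpj⟩ := Finset.mem_filter.1 hp
    have := hEv.1 p hpE
    rw [hpj, hpe] at this
    exact this
  · intro j
    have hinj : Set.InjOn Prod.fst ((E.filter (fun p => p.2 = j)) : Set (Fin k × Fin n)) := by
      intro p hp q hq h
      have hpj := (Finset.mem_filter.1 (Finset.mem_coe.1 hp)).2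
      have hqj := (Finset.mem_filter.1 (Finset.mem_coe.1 hq)).2
      exact Prod.ext h (hpj.trans hqj.symm)
    rw [Finset.card_image_of_injOn hinj]
    exact hCsat j
  · intro ℓ
    have hmemw : ∀ j, (ℓ ∈ (E.filter (fun p => p.2 = j)).image Prod.fst) ↔ (ℓ, j) ∈ E := by
      intro j
      constructor
      · intro h
        obtain ⟨p, hp, hpe⟩ := Finset.mem_image.1 h
        obtain ⟨hpE, hpj⟩ := Finset.mem_filter.1 hp
        have : p = (ℓ, j) := Prod.ext hpe hpj
        rwa [this] at hpE
      · intro h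
        exact Finset.mem_image.2 ⟨(ℓ, j), Finset.mem_filter.2 ⟨h, rfl⟩, rfl⟩
    rw [← hSsat ℓ]
    apply Finset.card_nbij (fun j => (ℓ, j))
    · intro j hj
      have := (Finset.mem_filter.1 hj).2
      exact Finset.mem_filter.2 ⟨(hmemw j).1 this, rfl⟩
    · intro x _ y _ h
      exact congrArg Prod.snd h
    · intro p hp
      simp only [Finset.coe_filter, Set.mem_setOf_eq] at hp
      obtain ⟨hpE, hpℓ⟩ := hp
      refine ⟨p.2, ?_, ?_⟩
      · simp only [Finset.coe_filter, Set.mem_setOf_eq]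
        refine ⟨Finset.mem_univ _, (hmemw p.2).2 ?_⟩
        have heq : p = (ℓ, p.2) := Prod.ext hpℓ rfl
        rwa [← heq]
      · show (ℓ, p.2) = p
        rw [← hpℓ]

lemma realize_aux {q p : ℕ} : ∀ N (b : Fin p → ℕ) (c : Fin q → ℕ),
    ∑ ℓ, b ℓ = N → ∑ x, c x = N →
    ∃ D : Fin q → Fin p → ℕ, (∀ x, ∑ ℓ, D x ℓ = c x) ∧ (∀ ℓ, ∑ x, D x ℓ = b ℓ) := by
  intro N
  induction N with
  | zero =>
    intro b c hb hc
    refine ⟨fun _ _ => 0, fun x => ?_, fun ℓ => ?_⟩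
    · have := (Finset.sum_eq_zero_iff.1 hc) x (Finset.mem_univ x)
      simp [this]
    · have := (Finset.sum_eq_zero_iff.1 hb) ℓ (Finset.mem_univ ℓ)
      simp [this]
  | succ N IH =>
    intro b c hb hc
    obtain ⟨ℓ0, hℓ0⟩ : ∃ ℓ0, 0 < b ℓ0 := by
      by_contra h
      push_neg at h
      have : ∑ ℓ, b ℓ = 0 := Finset.sum_eq_zero (fun ℓ _ => by have := h ℓ; omega)
      omega
    obtain ⟨x0, hx0⟩ : ∃ x0, 0 < c x0 := by
      by_contra h
      push_neg at h
      have : ∑ x, c x = 0 := Finset.sum_eq_zero (fun x _ => by have := h x; omega)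
      omega
    set b' := Function.update b ℓ0 (b ℓ0 - 1) with hb'
    set c' := Function.update c x0 (c x0 - 1) with hc'
    have hsb : ∑ ℓ, b' ℓ = N := by
      rw [hb', Finset.sum_update_of_mem (Finset.mem_univ ℓ0)]
      have h2 : ∑ ℓ, b ℓ = b ℓ0 + ∑ ℓ ∈ univ \ {ℓ0}, b ℓ := by
        rw [Finset.sum_eq_add_sum_sdiff_singleton_of_mem (Finset.mem_univ ℓ0)]
      omega
    have hsc : ∑ x, c' x = N := by
      rw [hc', Finset.sum_update_of_mem (Finset.mem_univ x0)]
      have h2 : ∑ x, c x = c x0 + ∑ x ∈ univ \ {x0}, c x := by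
        rw [Finset.sum_eq_add_sum_sdiff_singleton_of_mem (Finset.mem_univ x0)]
      omega
    obtain ⟨D', hD'r, hD'c⟩ := IH b' c' hsb hsc
    refine ⟨fun x ℓ => D' x ℓ + if x = x0 ∧ ℓ = ℓ0 then 1 else 0, fun x => ?_, fun ℓ => ?_⟩
    · rw [Finset.sum_add_distrib, hD'r x]
      by_cases hx : x = x0
      · subst hx
        have h1 : ∑ ℓ, (if x = x ∧ ℓ = ℓ0 then 1 else 0) = 1 := by
          simp
        rw [h1, hc', Function.update_self]
        omega
      · have h1 : ∑ ℓ, (if x = x0 ∧ ℓ = ℓ0 then (1:ℕ) else 0) = 0 := by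
          simp [hx]
        rw [h1, hc', Function.update_of_ne hx]
        omega
    · rw [Finset.sum_add_distrib, hD'c ℓ]
      by_cases hℓ : ℓ = ℓ0
      · subst hℓ
        have h1 : ∑ x, (if x = x0 ∧ ℓ = ℓ then 1 else 0) = 1 := by
          simp
        rw [h1, hb', Function.update_self]
        omega
      · have h1 : ∑ x, (if x = x0 ∧ ℓ = ℓ0 then (1:ℕ) else 0) = 0 := by
          simp [hℓ]
        rw [h1, hb', Function.update_of_ne hℓ]
        omega

lemma decomp {q : ℕ} : ∀ m (A : Fin q → Fin q → ℕ),
    (∀ x, ∑ y, A x y = m) → (∀ y, ∑ x, A x y = m) →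
    ∃ σ : Fin m → Equiv.Perm (Fin q),
      ∀ x y, A x y = ((univ : Finset (Fin m)).filter (fun t => σ t x = y)).card := by
  intro m
  induction m with
  | zero =>
    intro A hr hc
    refine ⟨fun t => Fin.elim0 t, fun x y => ?_⟩
    have h1 : A x y = 0 := (Finset.sum_eq_zero_iff.1 (hr x)) y (Finset.mem_univ y)
    rw [h1]
    symm
    simp
  | succ m IH =>
    intro A hr hc
    have hall : ∀ S : Finset (Fin q),
        S.card ≤ (S.biUnion (fun x => univ.filter (fun y => A x y ≠ 0))).card := by
      intro S
      set NB := S.biUnion (fun x => univ.filter (fun y => A x y ≠ 0)) with hNB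
      have h1 : ∑ x ∈ S, ∑ y, A x y = S.card * (m + 1) := by
        rw [Finset.sum_congr rfl (fun x _ => hr x), Finset.sum_const, smul_eq_mul]
      have h2 : ∀ x ∈ S, ∑ y, A x y = ∑ y ∈ NB, A x y := by
        intro x hx
        refine (Finset.sum_subset (Finset.subset_univ NB) ?_).symm
        intro y _ hy
        by_contra hA
        exact hy (Finset.mem_biUnion.2 ⟨x, hx, Finset.mem_filter.2 ⟨Finset.mem_univ y, hA⟩⟩)
      have h3 : ∑ x ∈ S, ∑ y ∈ NB, A x y ≤ NB.card * (m + 1) := by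
        rw [Finset.sum_comm]
        have h4 : ∀ y ∈ NB, ∑ x ∈ S, A x y ≤ m + 1 := by
          intro y _
          calc ∑ x ∈ S, A x y ≤ ∑ x, A x y :=
                Finset.sum_le_sum_of_subset (Finset.subset_univ S)
            _ = m + 1 := hc y
        calc ∑ y ∈ NB, ∑ x ∈ S, A x y ≤ ∑ _y ∈ NB, (m + 1) := Finset.sum_le_sum h4
          _ = NB.card * (m + 1) := by rw [Finset.sum_const, smul_eq_mul]
      have h5 : S.card * (m + 1) ≤ NB.card * (m + 1) := by
        rw [← h1]
        calc ∑ x ∈ S, ∑ y, A x y = ∑ x ∈ S, ∑ y ∈ NB, A x y :=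
              Finset.sum_congr rfl h2
          _ ≤ NB.card * (m + 1) := h3
      exact Nat.le_of_mul_le_mul_right h5 (by omega)
    obtain ⟨f, hfinj, hfmem⟩ :=
      (Finset.all_card_le_biUnion_card_iff_exists_injective
        (fun x => univ.filter (fun y => A x y ≠ 0))).1 hall
    let π : Equiv.Perm (Fin q) := Equiv.ofBijective f (Finite.injective_iff_bijective.1 hfinj)
    have hπ : ∀ x, A x (π x) ≠ 0 := fun x => (Finset.mem_filter.1 (hfmem x)).2
    set A' := fun x y => A x y - (if π x = y then 1 else 0) with hA'
    have hpoint : ∀ x y, A' x y + (if π x = y then 1 else 0) = A x y := by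
      intro x y
      by_cases h : π x = y
      · have hA : A x y ≠ 0 := h ▸ hπ x
        simp only [hA', if_pos h]
        omega
      · simp only [hA', if_neg h]
        omega
    have hr' : ∀ x, ∑ y, A' x y = m := by
      intro x
      have h1 : ∑ y, (A' x y + (if π x = y then 1 else 0)) = m + 1 := by
        rw [Finset.sum_congr rfl (fun y _ => hpoint x y)]
        exact hr x
      rw [Finset.sum_add_distrib] at h1
      have h2 : ∑ y, (if π x = y then (1:ℕ) else 0) = 1 := by
        simp
      omega
    have hc' : ∀ y, ∑ x, A' x y = m := by
      intro y
      have h1 : ∑ x, (A' x y + (if π x = y then 1 else 0)) = m + 1 := by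
        rw [Finset.sum_congr rfl (fun x _ => hpoint x y)]
        exact hc y
      rw [Finset.sum_add_distrib] at h1
      have h2 : ∑ x, (if π x = y then (1:ℕ) else 0) = 1 := by
        have h3 : ∀ x : Fin q, (π x = y) ↔ (x = π.symm y) := by
          intro x
          constructor
          · intro h; rw [← h, Equiv.symm_apply_apply]
          · intro h; rw [h, Equiv.apply_symm_apply]
        rw [Finset.sum_congr rfl (fun x _ => by rw [if_congr (h3 x) rfl rfl])]
        simp
      omega
    obtain ⟨σ', hσ'⟩ := IH A' hr' hc'
    refine ⟨Fin.cons π σ', fun x y => ?_⟩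
    have h1 : ((univ : Finset (Fin (m + 1))).filter (fun t => (Fin.cons π σ' : Fin (m+1) → Equiv.Perm (Fin q)) t x = y)).card
        = (if π x = y then 1 else 0) + ((univ : Finset (Fin m)).filter (fun t => σ' t x = y)).card := by
      rw [Finset.card_filter, Finset.card_filter, Fin.sum_univ_succ]
      simp [Fin.cons_zero, Fin.cons_succ]
    rw [h1, ← hσ' x y]
    have := hpoint x y
    omega

lemma card_filter_split {α : Type*} [Fintype α] (P Q : α → Prop)
    [DecidablePred P] [DecidablePred Q] :
    ((univ : Finset α).filter P).card =
      ((univ : Finset α).filter (fun x => P x ∧ Q x)).card +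
        ((univ : Finset α).filter (fun x => P x ∧ ¬ Q x)).card := by
  rw [Finset.card_filter, Finset.card_filter, Finset.card_filter, ← Finset.sum_add_distrib]
  refine Finset.sum_congr rfl (fun x _ => ?_)
  by_cases h1 : P x <;> by_cases h2 : Q x <;> simp [h1, h2]

lemma symCount_total {r s k : ℕ} (L : Fin r → Fin s → Fin k) :
    ∑ ℓ, symCount L ℓ = r * s := by
  classical
  have h := Finset.card_eq_sum_card_fiberwise (f := fun p : Fin r × Fin s => L p.1 p.2)
    (s := univ) (t := univ) (fun p _ => Finset.mem_univ _)
  rw [Finset.card_univ, Fintype.card_prod, Fintype.card_fin, Fintype.card_fin] at h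
  exact h.symm

lemma card_high {n r : ℕ} (hrn : r ≤ n) :
    ((univ : Finset (Fin n)).filter (fun i : Fin n => ¬ (i : ℕ) < r)).card = n - r := by
  classical
  have h1 : ((univ : Finset (Fin n)).filter (fun i : Fin n => ¬ (i : ℕ) < r)).card
      = (Finset.range n \ Finset.range r).card := by
    apply Finset.card_nbij (fun i : Fin n => (i : ℕ))
    · intro i hi
      have hi2 := (Finset.mem_filter.1 hi).2
      rw [Finset.mem_coe, Finset.mem_sdiff, Finset.mem_range, Finset.mem_range]
      exact ⟨i.isLt, hi2⟩
    · intro x _ y _ h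
      exact Fin.val_injective h
    · intro x hx
      have hx' := Finset.mem_coe.1 hx
      rw [Finset.mem_sdiff, Finset.mem_range, Finset.mem_range] at hx'
      refine ⟨⟨x, hx'.1⟩, ?_, rfl⟩
      exact Finset.mem_coe.2 (Finset.mem_filter.2 ⟨Finset.mem_univ _, hx'.2⟩)
  rw [h1, Finset.card_sdiff_of_subset (Finset.range_subset_range.2 hrn), Finset.card_range, Finset.card_range]

lemma topcount {n k r : ℕ} (hrn : r < n) (L : Fin r → Fin n → Fin k) (S : Fin n → Fin n → Fin k)
    (hext : extends' hrn.le le_rfl L S) (ℓ : Fin k) :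
    ((univ : Finset (Fin n × Fin n)).filter
      (fun p => S p.1 p.2 = ℓ ∧ (p.1 : ℕ) < r)).card = symCount L ℓ := by
  classical
  unfold symCount
  symm
  apply Finset.card_nbij (fun p => (Fin.castLE hrn.le p.1, p.2))
  · intro p hp
    have hp' := (Finset.mem_filter.1 hp).2
    refine Finset.mem_filter.2 ⟨Finset.mem_univ _, ?_, p.1.isLt⟩
    rw [show S (Fin.castLE hrn.le p.1) p.2 = L p.1 p.2 from hext p.1 p.2]
    exact hp'
  · intro p _ q _ h
    have hh : (Fin.castLE hrn.le p.1, p.2) = (Fin.castLE hrn.le q.1, q.2) := h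
    obtain ⟨h1, h2⟩ := Prod.mk.inj hh
    exact Prod.ext (Fin.castLE_injective hrn.le h1) h2
  · intro p hp
    simp only [Finset.coe_filter, Set.mem_setOf_eq] at hp
    obtain ⟨_, hS, hlt⟩ := hp
    refine ⟨(⟨(p.1 : ℕ), hlt⟩, p.2), ?_, ?_⟩
    · simp only [Finset.coe_filter, Set.mem_setOf_eq]
      refine ⟨Finset.mem_univ _, ?_⟩
      rw [← show S (Fin.castLE hrn.le ⟨(p.1 : ℕ), hlt⟩) p.2 = L ⟨(p.1 : ℕ), hlt⟩ p.2 from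
        hext ⟨(p.1 : ℕ), hlt⟩ p.2]
      have hc : Fin.castLE hrn.le ⟨(p.1 : ℕ), hlt⟩ = p.1 := Fin.ext rfl
      rw [hc]
      exact hS
    · show (Fin.castLE hrn.le ⟨(p.1 : ℕ), hlt⟩, p.2) = p
      exact Prod.ext (Fin.ext rfl) rfl

lemma necessity {n k r : ℕ} (hrn : r < n) (ρ : Fin k → ℕ) (L : Fin r → Fin n → Fin k)
    (S : Fin n → Fin n → Fin k) (hlat : latinArr S) (hcnt : ∀ ℓ, symCount S ℓ = ρ ℓ)
    (hext : extends' hrn.le le_rfl L S) :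
    (∀ ℓ, ρ ℓ - symCount L ℓ ≤ n - r) ∧
      ∀ K : Finset (Fin k), ∑ ℓ ∈ K, (ρ ℓ - symCount L ℓ) ≤
        ∑ j : Fin n, min (n - r) (muSymCol L K j) := by
  classical
  obtain ⟨hrow, hcol⟩ := hlat
  have hextj : ∀ (i : Fin r) (j : Fin n), S (Fin.castLE hrn.le i) j = L i j :=
    fun i j => hext i j
  set bot : Fin k → ℕ := fun ℓ =>
    ((univ : Finset (Fin n × Fin n)).filter
      (fun p => S p.1 p.2 = ℓ ∧ ¬ (p.1 : ℕ) < r)).card with hbot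
  have hsplitS : ∀ ℓ, symCount S ℓ = symCount L ℓ + bot ℓ := by
    intro ℓ
    rw [← topcount hrn L S hext ℓ, hbot]
    exact card_filter_split (fun p : Fin n × Fin n => S p.1 p.2 = ℓ) (fun p => (p.1 : ℕ) < r)
  have hρeq : ∀ ℓ, ρ ℓ = symCount L ℓ + bot ℓ := fun ℓ => by rw [← hcnt ℓ, hsplitS ℓ]
  have hbotle : ∀ ℓ, bot ℓ ≤ n - r := by
    intro ℓ
    rw [← card_high hrn.le]
    apply Finset.card_le_card_of_injOn (fun p => p.1)
    · intro p hp
      exact Finset.mem_filter.2 ⟨Finset.mem_univ _, ((Finset.mem_filter.1 hp).2).2⟩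
    · intro p hp q hq h
      have h' : p.1 = q.1 := h
      have hSp := ((Finset.mem_filter.1 (Finset.mem_coe.1 hp)).2).1
      have hSq := ((Finset.mem_filter.1 (Finset.mem_coe.1 hq)).2).1
      have h3 : S p.1 p.2 = S p.1 q.2 := by
        rw [hSp, h']
        exact hSq.symm
      exact Prod.ext h' (hrow p.1 h3)
  refine ⟨fun ℓ => by have h1 := hρeq ℓ; have h2 := hbotle ℓ; omega, ?_⟩
  intro K
  have h1 : ∑ ℓ ∈ K, (ρ ℓ - symCount L ℓ) = ∑ ℓ ∈ K, bot ℓ :=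
    Finset.sum_congr rfl (fun ℓ _ => by have := hρeq ℓ; omega)
  rw [h1]
  set B := (univ : Finset (Fin n × Fin n)).filter
    (fun p => S p.1 p.2 ∈ K ∧ ¬ (p.1 : ℕ) < r) with hB
  have h2 : ∑ ℓ ∈ K, bot ℓ = B.card := by
    rw [hB, Finset.card_eq_sum_card_fiberwise (f := fun p => S p.1 p.2) (t := K)
      (fun p hp => (Finset.mem_filter.1 hp).2.1)]
    refine Finset.sum_congr rfl (fun ℓ hℓ => ?_)
    rw [hbot, Finset.filter_filter]
    symm
    refine congrArg Finset.card (Finset.filter_congr (fun p _ => ?_))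
    constructor
    · rintro ⟨⟨_, hb⟩, hc⟩
      exact ⟨hc, hb⟩
    · rintro ⟨hc, hb⟩
      exact ⟨⟨by rw [hc]; exact hℓ, hb⟩, hc⟩
  rw [h2]
  have h3 : B.card = ∑ j : Fin n, ((univ : Finset (Fin n × Fin n)).filter
      (fun p => (S p.1 p.2 ∈ K ∧ ¬ (p.1 : ℕ) < r) ∧ p.2 = j)).card := by
    rw [hB, Finset.card_eq_sum_card_fiberwise (f := Prod.snd) (t := univ)
      (fun p _ => Finset.mem_univ _)]
    exact Finset.sum_congr rfl (fun j _ => by rw [Finset.filter_filter])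
  rw [h3]
  refine Finset.sum_le_sum (fun j _ => ?_)
  refine le_min ?_ ?_
  · rw [← card_high hrn.le]
    apply Finset.card_le_card_of_injOn (fun p => p.1)
    · intro p hp
      exact Finset.mem_filter.2 ⟨Finset.mem_univ _, ((Finset.mem_filter.1 hp).2).1.2⟩
    · intro p hp q hq h
      have h' : p.1 = q.1 := h
      have hpj := ((Finset.mem_filter.1 (Finset.mem_coe.1 hp)).2).2
      have hqj := ((Finset.mem_filter.1 (Finset.mem_coe.1 hq)).2).2
      exact Prod.ext h' (hpj.trans hqj.symm)
  · unfold muSymCol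
    apply Finset.card_le_card_of_injOn (fun p => S p.1 p.2)
    · intro p hp
      obtain ⟨⟨hK', hge⟩, hj⟩ := (Finset.mem_filter.1 hp).2
      refine Finset.mem_filter.2 ⟨hK', ?_⟩
      intro i heq
      have heq' : L i p.2 = S p.1 p.2 := (congrArg (L i) hj).trans heq
      have hSe : S (Fin.castLE hrn.le i) p.2 = S p.1 p.2 := (hextj i p.2).trans heq'
      have h4 : Fin.castLE hrn.le i = p.1 := hcol p.2 hSe
      have h5 : (p.1 : ℕ) < r := by
        rw [← h4]
        exact i.isLt
      exact hge h5
    · intro p hp q hq h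
      have h' : S p.1 p.2 = S q.1 q.2 := h
      have hpm := (Finset.mem_filter.1 (Finset.mem_coe.1 hp)).2
      have hqm := (Finset.mem_filter.1 (Finset.mem_coe.1 hq)).2
      have hpj := hpm.2
      have hqj := hqm.2
      have hqp : q.2 = p.2 := hqj.trans hpj.symm
      have h6 : S p.1 p.2 = S q.1 p.2 := h'.trans (congrArg (S q.1) hqp)
      have h7 : p.1 = q.1 := hcol p.2 h6
      exact Prod.ext h7 (hpj.trans hqj.symm)

set_option maxHeartbeats 2000000 in
lemma sufficiency {n k r : ℕ} (hrn : r < n) (hnk : n ≤ k)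
    (ρ : Fin k → ℕ) (hsum : ∑ ℓ, ρ ℓ = n ^ 2)
    (L : Fin r → Fin n → Fin k) (hL : latinArr L)
    (he : ∀ ℓ, symCount L ℓ ≤ ρ ℓ)
    (h1 : ∀ ℓ, ρ ℓ - symCount L ℓ ≤ n - r)
    (h2 : ∀ K : Finset (Fin k), ∑ ℓ ∈ K, (ρ ℓ - symCount L ℓ) ≤
      ∑ j : Fin n, min (n - r) (muSymCol L K j)) :
    ∃ S : Fin n → Fin n → Fin k, rhoLatinSquare ρ S ∧ extends' hrn.le le_rfl L S := by
  classical
  obtain ⟨hLrow, hLcol⟩ := hL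
  set m := n - r with hm
  set a : Fin k → ℕ := fun ℓ => ρ ℓ - symCount L ℓ with ha
  set M : Fin n → Finset (Fin k) := fun j => univ.filter (fun ℓ => ∀ i, L i j ≠ ℓ) with hM
  have hete : ∑ ℓ, symCount L ℓ = r * n := symCount_total L
  have hmul : n * m + r * n = n ^ 2 := by
    have hmr : m + r = n := by omega
    calc n * m + r * n = (m + r) * m + r * (m + r) := by rw [hmr]
      _ = (m + r) * (m + r) := by ring
      _ = n ^ 2 := by rw [hmr]; ring
  have hsa : ∑ ℓ, a ℓ = n * m := by
    have hs1 : ∑ ℓ, (a ℓ + symCount L ℓ) = ∑ ℓ, ρ ℓ :=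
      Finset.sum_congr rfl (fun ℓ _ => by have := he ℓ; simp only [ha]; omega)
    rw [Finset.sum_add_distrib, hete, hsum] at hs1
    omega
  have hcut : ∀ K : Finset (Fin k), ∑ ℓ ∈ K, a ℓ ≤ ∑ j, min m ((K ∩ M j).card) := by
    intro K
    have hKM : ∀ j, muSymCol L K j = (K ∩ M j).card := by
      intro j
      unfold muSymCol
      congr 1
      ext ℓ
      simp [hM]
    calc ∑ ℓ ∈ K, a ℓ ≤ ∑ j, min m (muSymCol L K j) := h2 K
      _ = ∑ j, min m ((K ∩ M j).card) :=
          Finset.sum_congr rfl (fun j _ => by rw [hKM j])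
  obtain ⟨w, hwM, hwcard, hwcnt⟩ := GR_exists M a m hsa hcut
  set b : Fin k → ℕ := fun ℓ => m - a ℓ with hb
  have hsb : ∑ _x : Fin (k - n), m = ∑ ℓ, b ℓ := by
    have hs2 : ∑ ℓ, (b ℓ + a ℓ) = ∑ _ℓ : Fin k, m :=
      Finset.sum_congr rfl (fun ℓ _ => by have := h1 ℓ; simp only [hb, ha]; omega)
    rw [Finset.sum_add_distrib, hsa] at hs2
    rw [Finset.sum_const, Finset.card_univ, Fintype.card_fin, smul_eq_mul] at hs2
    rw [Finset.sum_const, Finset.card_univ, Fintype.card_fin, smul_eq_mul]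
    have h3 : (k - n) * m + n * m = k * m := by
      rw [← Nat.add_mul]
      congr 1
      omega
    omega
  obtain ⟨D, hDr, hDc⟩ := realize_aux (∑ ℓ, b ℓ) b (fun _ => m) rfl hsb
  set e : Fin n ⊕ Fin (k - n) ≃ Fin k :=
    (finSumFinEquiv).trans (finCongr (by omega : n + (k - n) = k)) with hee
  set A : Fin k → Fin k → ℕ :=
    fun x ℓ => Sum.elim (fun j => if ℓ ∈ w j then 1 else 0) (fun y => D y ℓ) (e.symm x) with hA
  have hA1 : ∀ (j : Fin n) ℓ, A (e (Sum.inl j)) ℓ = if ℓ ∈ w j then 1 else 0 := by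
    intro j ℓ
    simp [hA]
  have hArow : ∀ x, ∑ ℓ, A x ℓ = m := by
    intro x
    rcases hsx : e.symm x with j | y
    · have hax : ∀ ℓ, A x ℓ = if ℓ ∈ w j then 1 else 0 := by
        intro ℓ
        simp [hA, hsx]
      rw [Finset.sum_congr rfl (fun ℓ _ => hax ℓ), Finset.sum_ite_mem, Finset.univ_inter,
        Finset.sum_const, smul_eq_mul, mul_one, hwcard j]
    · have hax : ∀ ℓ, A x ℓ = D y ℓ := by
        intro ℓ
        simp [hA, hsx]
      rw [Finset.sum_congr rfl (fun ℓ _ => hax ℓ)]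
      exact hDr y
  have hAcol : ∀ ℓ, ∑ x, A x ℓ = m := by
    intro ℓ
    have hcomp : ∑ x : Fin k, A x ℓ = ∑ s : Fin n ⊕ Fin (k - n),
        Sum.elim (fun j => if ℓ ∈ w j then 1 else 0) (fun y => D y ℓ) s := by
      rw [← Equiv.sum_comp e (fun x => A x ℓ)]
      refine Finset.sum_congr rfl (fun s _ => ?_)
      simp [hA]
    rw [hcomp, Fintype.sum_sum_type]
    have hterm1 : ∑ j : Fin n, (if ℓ ∈ w j then (1:ℕ) else 0) =
        ((univ : Finset (Fin n)).filter (fun j => ℓ ∈ w j)).card := (Finset.card_filter _ _).symm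
    simp only [Sum.elim_inl, Sum.elim_inr]
    rw [hterm1, hwcnt ℓ, hDc ℓ]
    have := h1 ℓ
    simp only [hb, ha]
    omega
  obtain ⟨σ, hσ⟩ := decomp m A hArow hAcol
  have hcard1 : ∀ (j : Fin n) ℓ,
      ((univ : Finset (Fin m)).filter (fun t => σ t (e (Sum.inl j)) = ℓ)).card =
        if ℓ ∈ w j then 1 else 0 := by
    intro j ℓ
    rw [← hσ, hA1]
  have hwmem : ∀ (j : Fin n) (t : Fin m), σ t (e (Sum.inl j)) ∈ w j := by
    intro j t
    by_contra hc
    have hcd := hcard1 j (σ t (e (Sum.inl j)))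
    rw [if_neg hc] at hcd
    have hmm : t ∈ (univ : Finset (Fin m)).filter
        (fun t' => σ t' (e (Sum.inl j)) = σ t (e (Sum.inl j))) :=
      Finset.mem_filter.2 ⟨Finset.mem_univ _, rfl⟩
    have := Finset.card_pos.2 ⟨t, hmm⟩
    omega
  have hbotinj : ∀ j : Fin n, Function.Injective (fun t : Fin m => σ t (e (Sum.inl j))) := by
    intro j t1 t2 ht
    by_contra hne
    have ht' : σ t1 (e (Sum.inl j)) = σ t2 (e (Sum.inl j)) := ht
    have hmem1 : t1 ∈ (univ : Finset (Fin m)).filter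
        (fun t => σ t (e (Sum.inl j)) = σ t2 (e (Sum.inl j))) :=
      Finset.mem_filter.2 ⟨Finset.mem_univ _, ht'⟩
    have hmem2 : t2 ∈ (univ : Finset (Fin m)).filter
        (fun t => σ t (e (Sum.inl j)) = σ t2 (e (Sum.inl j))) :=
      Finset.mem_filter.2 ⟨Finset.mem_univ _, rfl⟩
    have h12 := Finset.one_lt_card.2 ⟨t1, hmem1, t2, hmem2, hne⟩
    have hcc := hcard1 j (σ t2 (e (Sum.inl j)))
    rw [hcc] at h12
    split at h12 <;> omega
  have hMprop : ∀ (j : Fin n) ℓ, ℓ ∈ w j → ∀ i, L i j ≠ ℓ := by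
    intro j ℓ hℓ
    have hmem := hwM j hℓ
    rw [hM] at hmem
    exact (Finset.mem_filter.1 hmem).2
  set S : Fin n → Fin n → Fin k := fun i j =>
    if h : (i : ℕ) < r then L ⟨(i : ℕ), h⟩ j
    else σ ⟨(i : ℕ) - r, by have := i.isLt; omega⟩ (e (Sum.inl j)) with hS
  have hext : extends' hrn.le le_rfl L S := by
    intro i j
    have hc : ((Fin.castLE hrn.le i : Fin n) : ℕ) < r := i.isLt
    simp only [hS]
    rw [dif_pos hc]
    exact congrFun (congrArg L (Fin.ext rfl)) j
  have hrowinj : ∀ i, Function.Injective (S i) := by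
    intro i j1 j2 hj
    by_cases h : (i : ℕ) < r
    · simp only [hS, dif_pos h] at hj
      exact hLrow _ hj
    · simp only [hS, dif_neg h] at hj
      have hinj1 := (σ _).injective hj
      have hinj2 := e.injective hinj1
      exact Sum.inl.inj hinj2
  have hcolinj : ∀ j, Function.Injective (fun i => S i j) := by
    intro j i1 i2 hj
    simp only at hj
    by_cases hc1 : (i1 : ℕ) < r <;> by_cases hc2 : (i2 : ℕ) < r
    · simp only [hS, dif_pos hc1, dif_pos hc2] at hj
      have hLe := hLcol j hj
      have hv := congrArg Fin.val hLe
      have hv2 : (i1 : ℕ) = (i2 : ℕ) := hv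
      exact Fin.ext hv2
    · exfalso
      simp only [hS, dif_pos hc1, dif_neg hc2] at hj
      have hmem := hwmem j ⟨(i2 : ℕ) - r, by have := i2.isLt; omega⟩
      have hne := hMprop j _ hmem ⟨(i1 : ℕ), hc1⟩
      exact hne hj
    · exfalso
      simp only [hS, dif_neg hc1, dif_pos hc2] at hj
      have hmem := hwmem j ⟨(i1 : ℕ) - r, by have := i1.isLt; omega⟩
      have hne := hMprop j _ hmem ⟨(i2 : ℕ), hc2⟩
      exact hne hj.symm
    · simp only [hS, dif_neg hc1, dif_neg hc2] at hj
      have heqt := hbotinj j hj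
      have hv := congrArg Fin.val heqt
      have hv2 : (i1 : ℕ) - r = (i2 : ℕ) - r := hv
      exact Fin.ext (by omega)
  have hcnt : ∀ ℓ, symCount S ℓ = ρ ℓ := by
    intro ℓ
    have hsplit : symCount S ℓ =
        ((univ : Finset (Fin n × Fin n)).filter
          (fun p => S p.1 p.2 = ℓ ∧ (p.1 : ℕ) < r)).card +
        ((univ : Finset (Fin n × Fin n)).filter
          (fun p => S p.1 p.2 = ℓ ∧ ¬ (p.1 : ℕ) < r)).card :=
      card_filter_split _ _
    have htop := topcount hrn L S hext ℓ
    have hbotcard : ((univ : Finset (Fin n × Fin n)).filter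
        (fun p => S p.1 p.2 = ℓ ∧ ¬ (p.1 : ℕ) < r)).card = a ℓ := by
      have hstep1 : ((univ : Finset (Fin n × Fin n)).filter
          (fun p => S p.1 p.2 = ℓ ∧ ¬ (p.1 : ℕ) < r)).card =
          ((univ : Finset (Fin m × Fin n)).filter
            (fun q => σ q.1 (e (Sum.inl q.2)) = ℓ)).card := by
        apply Finset.card_nbij (fun p : Fin n × Fin n =>
          ((⟨(p.1 : ℕ) - r, by have := p.1.isLt; omega⟩ : Fin m), p.2))
        · intro p hp
          obtain ⟨hS1, hge⟩ := (Finset.mem_filter.1 hp).2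
          refine Finset.mem_filter.2 ⟨Finset.mem_univ _, ?_⟩
          simp only [hS, dif_neg hge] at hS1
          exact hS1
        · intro p hp q hq h
          have hgp := ((Finset.mem_filter.1 (Finset.mem_coe.1 hp)).2).2
          have hgq := ((Finset.mem_filter.1 (Finset.mem_coe.1 hq)).2).2
          have hh : ((⟨(p.1 : ℕ) - r, by have := p.1.isLt; omega⟩ : Fin m), p.2) =
              ((⟨(q.1 : ℕ) - r, by have := q.1.isLt; omega⟩ : Fin m), q.2) := h
          obtain ⟨hfst, hsnd⟩ := Prod.mk.inj hh
          have hv : (p.1 : ℕ) - r = (q.1 : ℕ) - r := congrArg Fin.val hfst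
          exact Prod.ext (Fin.ext (by omega)) hsnd
        · intro q hq
          have hq' := (Finset.mem_filter.1 (Finset.mem_coe.1 hq)).2
          have hq1lt : (q.1 : ℕ) < m := q.1.isLt
          refine ⟨((⟨(q.1 : ℕ) + r, by omega⟩ : Fin n), q.2), ?_, ?_⟩
          · refine Finset.mem_coe.2 (Finset.mem_filter.2 ⟨Finset.mem_univ _, ?_, ?_⟩)
            · have hge : ¬ ((⟨(q.1 : ℕ) + r, by omega⟩ : Fin n) : ℕ) < r := by
                show ¬ (q.1 : ℕ) + r < r
                omega
              simp only [hS]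
              rw [dif_neg hge]
              have ht : (⟨((⟨(q.1 : ℕ) + r, by omega⟩ : Fin n) : ℕ) - r,
                  by have := q.1.isLt; omega⟩ : Fin m) = q.1 := by
                apply Fin.ext
                show ((q.1 : ℕ) + r) - r = (q.1 : ℕ)
                omega
              exact (congrArg (fun t => σ t (e (Sum.inl q.2))) ht).trans hq'
            · show ¬ (q.1 : ℕ) + r < r
              omega
          · refine Prod.ext ?_ rfl
            apply Fin.ext
            show ((q.1 : ℕ) + r) - r = (q.1 : ℕ)
            omega
      have hstep2 : ((univ : Finset (Fin m × Fin n)).filter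
          (fun q => σ q.1 (e (Sum.inl q.2)) = ℓ)).card =
          ∑ j : Fin n, ((univ : Finset (Fin m)).filter
            (fun t => σ t (e (Sum.inl j)) = ℓ)).card := by
        rw [Finset.card_eq_sum_card_fiberwise (f := Prod.snd) (t := univ)
          (fun q _ => Finset.mem_univ _)]
        refine Finset.sum_congr rfl (fun j _ => ?_)
        rw [Finset.filter_filter]
        apply Finset.card_nbij (fun q : Fin m × Fin n => q.1)
        · intro q hq
          obtain ⟨hq1, hq2⟩ := (Finset.mem_filter.1 hq).2
          refine Finset.mem_filter.2 ⟨Finset.mem_univ _, ?_⟩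
          rw [← hq2]
          exact hq1
        · intro x hx y hy h
          have hx2 := ((Finset.mem_filter.1 (Finset.mem_coe.1 hx)).2).2
          have hy2 := ((Finset.mem_filter.1 (Finset.mem_coe.1 hy)).2).2
          have h' : x.1 = y.1 := h
          exact Prod.ext h' (hx2.trans hy2.symm)
        · intro t ht
          have ht' := (Finset.mem_filter.1 (Finset.mem_coe.1 ht)).2
          exact ⟨(t, j), Finset.mem_coe.2
            (Finset.mem_filter.2 ⟨Finset.mem_univ _, ht', rfl⟩), rfl⟩
      rw [hstep1, hstep2, Finset.sum_congr rfl (fun j _ => hcard1 j ℓ), ← Finset.card_filter]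
      exact hwcnt ℓ
    rw [hsplit, htop, hbotcard]
    have := he ℓ
    simp only [ha]
    omega
  exact ⟨S, ⟨⟨hrowinj, hcolinj⟩, hcnt⟩, hext⟩

end Stmt5Aux


/-- Hall-type completion, symbol-set form: an `r × n` `ρ`-latin rectangle
completes to an `n × n` `ρ`-latin square iff `ρ_ℓ - e_ℓ ≤ n - r` for all `ℓ`
and `∑_{ℓ∈K}(ρ_ℓ - e_ℓ) ≤ ∑_j min{n-r, μ_K(j)}` for all symbol sets `K`. -/
theorem stmt5 (n k r : ℕ) (hr : 1 ≤ r) (hrn : r < n) (hnk : n ≤ k)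
    (ρ : Fin k → ℕ) (hρ1 : ∀ ℓ, 1 ≤ ρ ℓ) (hρn : ∀ ℓ, ρ ℓ ≤ n)
    (hsum : ∑ ℓ, ρ ℓ = n ^ 2)
    (L : Fin r → Fin n → Fin k) (hL : latinArr L)
    (he : ∀ ℓ, symCount L ℓ ≤ ρ ℓ) :
    (∃ S : Fin n → Fin n → Fin k, rhoLatinSquare ρ S ∧ extends' hrn.le le_rfl L S) ↔
      ((∀ ℓ, ρ ℓ - symCount L ℓ ≤ n - r) ∧
        ∀ K : Finset (Fin k),
          ∑ ℓ ∈ K, (ρ ℓ - symCount L ℓ) ≤ ∑ j : Fin n, min (n - r) (muSymCol L K j)) := by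
  constructor
  · rintro ⟨S, ⟨hlat, hcnt⟩, hext⟩
    exact Stmt5Aux.necessity hrn ρ L S hlat hcnt hext
  · rintro ⟨h1, h2⟩
    exact Stmt5Aux.sufficiency hrn hnk ρ hsum L hL he h1 h2
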